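/- arXiv:2210.04978 — 4 statements merged into one kernel-verified Lean document; each statement's English description precedes it below -/
import Mathlib

section
/- A compact Hausdorff space is discrete homogeneous if and only if it is n-homogeneous for every positive integer n. -/
def IsDiscreteSubset {X : Type*} [TopologicalSpace X] (A : Set X) : Prop :=
  ∀ x : X, ∃ U ∈ nhds x, (U ∩ A).Subsingleton

def DiscreteHomogeneous (X : Type*) [TopologicalSpace X] : Prop :=
  ∀ A B : Set X, IsDiscreteSubset A → IsDiscreteSubset B →
    Nonempty (A ≃ B) → ∃ h : X ≃ₜ X, h '' A = B

/-- A space is `n`-homogeneous if any two `n`-element subsets are mapped onto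
each other by some self-homeomorphism. -/
def NHomogeneous (X : Type*) [TopologicalSpace X] (n : ℕ) : Prop :=
  ∀ A B : Set X, A.ncard = n → B.ncard = n → ∃ h : X ≃ₜ X, h '' A = B

lemma finite_isDiscreteSubset {X : Type*} [TopologicalSpace X] [T2Space X] {A : Set X}
    (hA : A.Finite) : IsDiscreteSubset A := by
  intro x
  refine ⟨(A \ {x})ᶜ, ((hA.diff).isClosed.isOpen_compl).mem_nhds (by simp), ?_⟩
  rintro y ⟨hy1, hy2⟩ z ⟨hz1, hz2⟩
  have hy : y = x := by by_contra h; exact hy1 ⟨hy2, h⟩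
  have hz : z = x := by by_contra h; exact hz1 ⟨hz2, h⟩
  rw [hy, hz]

lemma isDiscreteSubset_finite {X : Type*} [TopologicalSpace X] [CompactSpace X] {A : Set X}
    (hA : IsDiscreteSubset A) : A.Finite := by
  choose U hU hsub using hA
  choose V hVU hVopen hxV using fun x => mem_nhds_iff.mp (hU x)
  obtain ⟨s, hs⟩ := isCompact_univ.elim_finite_subcover V hVopen
    (fun x _ => Set.mem_iUnion.mpr ⟨x, hxV x⟩)
  have : A ⊆ ⋃ x ∈ s, (V x ∩ A) := by
    intro a ha
    obtain ⟨x, hx, hax⟩ := Set.mem_iUnion₂.mp (hs (Set.mem_univ a))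
    exact Set.mem_iUnion₂.mpr ⟨x, hx, hax, ha⟩
  refine Set.Finite.subset (Set.Finite.biUnion s.finite_toSet fun x _ => ?_) this
  exact Set.Subsingleton.finite fun a ha b hb =>
    hsub x ⟨hVU x ha.1, ha.2⟩ ⟨hVU x hb.1, hb.2⟩

theorem compact_discreteHomogeneous_iff_nHomogeneous
    (X : Type*) [TopologicalSpace X] [CompactSpace X] [T2Space X] :
    DiscreteHomogeneous X ↔ ∀ n : ℕ, 0 < n → NHomogeneous X n := by
  constructor
  · intro H n hn A B hAn hBn
    have hAf : A.Finite := Set.finite_of_ncard_pos (hAn ▸ hn)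
    have hBf : B.Finite := Set.finite_of_ncard_pos (hBn ▸ hn)
    have : Nonempty (A ≃ B) := by
      have := hAf.to_subtype; have := hBf.to_subtype
      exact Finite.card_eq.mp (by
        rw [Nat.card_coe_set_eq, Nat.card_coe_set_eq, hAn, hBn])
    exact H A B (finite_isDiscreteSubset hAf) (finite_isDiscreteSubset hBf) this
  · intro H A B hA hB ⟨e⟩
    have hAf := isDiscreteSubset_finite hA
    have hBf := isDiscreteSubset_finite hB
    have hcard : A.ncard = B.ncard := by
      rw [← Nat.card_coe_set_eq, ← Nat.card_coe_set_eq]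
      exact Nat.card_congr e
    rcases Nat.eq_zero_or_pos A.ncard with h0 | hpos
    · have hA0 : A = ∅ := (Set.ncard_eq_zero hAf).mp h0
      have hB0 : B = ∅ := (Set.ncard_eq_zero hBf).mp (hcard ▸ h0)
      exact ⟨Homeomorph.refl X, by simp [hA0, hB0]⟩
    · exact H A.ncard hpos A B rfl hcard.symm
end

section
/- A compact Hausdorff space is strongly discrete homogeneous if and only if it is strongly n-homogeneous for every positive integer n. -/
/-- A space is strongly discrete homogeneous if every bijection between two
discrete subsets extends to a self-homeomorphism. -/
def StronglyDiscreteHomogeneous (X : Type*) [TopologicalSpace X] : Prop :=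
  ∀ (A B : Set X) (f : X → X), IsDiscreteSubset A → IsDiscreteSubset B →
    Set.BijOn f A B → ∃ h : X ≃ₜ X, Set.EqOn h f A

def StronglyNHomogeneous (X : Type*) [TopologicalSpace X] (n : ℕ) : Prop :=
  ∀ (A B : Set X) (f : X → X), A.ncard = n → B.ncard = n → Set.BijOn f A B →
    ∃ h : X ≃ₜ X, Set.EqOn h f A

lemma finite_of_isDiscreteSubset {X : Type*} [TopologicalSpace X] [CompactSpace X]
    (A : Set X) (h : IsDiscreteSubset A) : A.Finite := by
  choose U hU hsub using h
  obtain ⟨t, ht⟩ := IsCompact.elim_nhds_subcover isCompact_univ U (fun x _ => hU x)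
  have hA : A ⊆ ⋃ x ∈ t, U x ∩ A := by
    intro a ha
    have := ht.2 (Set.mem_univ a)
    simp only [Set.mem_iUnion] at this ⊢
    obtain ⟨x, hx, hxa⟩ := this
    exact ⟨x, hx, hxa, ha⟩
  exact Set.Finite.subset (Set.Finite.biUnion t.finite_toSet
    (fun x _ => (hsub x).finite)) hA

lemma isDiscreteSubset_of_finite {X : Type*} [TopologicalSpace X] [T1Space X]
    (A : Set X) (hA : A.Finite) : IsDiscreteSubset A := by
  intro x
  refine ⟨(A \ {x})ᶜ, ?_, ?_⟩
  · exact ((hA.diff : (A \ {x}).Finite).isClosed).isOpen_compl.mem_nhds (by simp)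
  · intro a ⟨ha1, ha2⟩ b ⟨hb1, hb2⟩
    simp only [Set.mem_compl_iff, Set.mem_diff, Set.mem_singleton_iff, not_and, not_not] at ha1 hb1
    rw [ha1 ha2, hb1 hb2]

theorem compact_stronglyDiscreteHomogeneous_iff_stronglyNHomogeneous
    (X : Type*) [TopologicalSpace X] [CompactSpace X] [T2Space X] :
    StronglyDiscreteHomogeneous X ↔ ∀ n : ℕ, 0 < n → StronglyNHomogeneous X n := by
  constructor
  · intro h n hn A B f hA hB hf
    have hAfin : A.Finite := Set.finite_of_ncard_ne_zero (by omega)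
    have hBfin : B.Finite := Set.finite_of_ncard_ne_zero (by omega)
    exact h A B f (isDiscreteSubset_of_finite A hAfin) (isDiscreteSubset_of_finite B hBfin) hf
  · intro h A B f hA hB hf
    have hAfin := finite_of_isDiscreteSubset A hA
    rcases A.eq_empty_or_nonempty with rfl | hne
    · exact ⟨Homeomorph.refl X, fun x hx => absurd hx (Set.notMem_empty x)⟩
    · have hn : 0 < A.ncard := (Set.ncard_pos hAfin).mpr hne
      have hBn : B.ncard = A.ncard := by
        rw [← hf.image_eq, Set.ncard_image_of_injOn hf.injOn]
      exact h A.ncard hn A B f rfl hBn hf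
end

section
/- If a generalized continuum X has more than one end, then X is not discrete homogeneous. -/
def IsComponentOf {X : Type*} [TopologicalSpace X] (C S : Set X) : Prop :=
  ∃ x ∈ S, C = connectedComponentIn S x

def IsEnd {X : Type*} [TopologicalSpace X] (K : ℕ → Set X) (Y : ℕ → Set X) : Prop :=
  ∀ n, (Y n).Nonempty ∧ IsComponentOf (Y n) (K n)ᶜ ∧ Y (n + 1) ⊆ Y n

/-- A set `S` is "one-ended": outside each compact set, a connected set absorbs all
but finitely many points of `S`. This is a homeomorphism invariant. -/
def OneEnded {X : Type*} [TopologicalSpace X] (S : Set X) : Prop :=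
  ∀ C : Set X, IsCompact C → ∃ T : Set X, IsPreconnected T ∧ T ⊆ Cᶜ ∧ (S \ T).Finite

section Aux

variable {X : Type*} [TopologicalSpace X]

lemma K_mono (K : ℕ → Set X) (hKi : ∀ n, K n ⊆ interior (K (n + 1))) :
    Monotone K :=
  monotone_nat_of_le_succ fun n => (hKi n).trans interior_subset

lemma absorb (K : ℕ → Set X) (hKi : ∀ n, K n ⊆ interior (K (n + 1)))
    (hKu : (⋃ n, K n) = Set.univ) {C : Set X} (hC : IsCompact C) :
    ∃ m, C ⊆ K m := by
  have hcover : C ⊆ ⋃ n, interior (K n) := by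
    intro x _
    have hx : x ∈ ⋃ n, K n := hKu ▸ Set.mem_univ x
    obtain ⟨n, hn⟩ := Set.mem_iUnion.1 hx
    exact Set.mem_iUnion.2 ⟨n + 1, hKi n hn⟩
  obtain ⟨t, ht⟩ := hC.elim_finite_subcover (fun n => interior (K n))
    (fun n => isOpen_interior) hcover
  refine ⟨t.sup id, fun x hx => ?_⟩
  obtain ⟨i, hi, hxi⟩ := Set.mem_iUnion₂.1 (ht hx)
  exact K_mono K hKi (Finset.le_sup (f := id) hi) (interior_subset hxi)

lemma infinite_of_escape [T2Space X] (K : ℕ → Set X)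
    (hKi : ∀ n, K n ⊆ interior (K (n + 1))) (hKu : (⋃ n, K n) = Set.univ)
    (p : ℕ → X) (hp : ∀ N, (p ⁻¹' K N).Finite) : (Set.range p).Infinite := by
  intro hfin
  obtain ⟨m, hm⟩ := absorb K hKi hKu hfin.isCompact
  have : (p ⁻¹' K m) = Set.univ := by
    ext n
    simp only [Set.mem_univ, iff_true, Set.mem_preimage]
    exact hm ⟨n, rfl⟩
  exact Set.infinite_univ (this ▸ hp m)

lemma discrete_of_escape [T2Space X] (K : ℕ → Set X)
    (hKi : ∀ n, K n ⊆ interior (K (n + 1))) (hKu : (⋃ n, K n) = Set.univ)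
    (p : ℕ → X) (hp : ∀ N, (p ⁻¹' K N).Finite) : IsDiscreteSubset (Set.range p) := by
  intro x
  have hx : x ∈ ⋃ n, K n := hKu ▸ Set.mem_univ x
  obtain ⟨m, hm⟩ := Set.mem_iUnion.1 hx
  set N := m + 1 with hN
  have hxint : x ∈ interior (K N) := hKi m hm
  have hFfin : (p '' (p ⁻¹' K N)).Finite := (hp N).image p
  have hclosed : IsClosed (p '' (p ⁻¹' K N) \ {x}) := (hFfin.diff).isClosed
  refine ⟨interior (K N) \ (p '' (p ⁻¹' K N) \ {x}), ?_, ?_⟩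
  · exact (isOpen_interior.sdiff hclosed).mem_nhds ⟨hxint, fun h => h.2 rfl⟩
  · rintro u ⟨⟨hu1, hu2⟩, n, rfl⟩ v ⟨⟨hv1, hv2⟩, k, rfl⟩
    have hu1' : p n ∈ K N := interior_subset hu1
    have hv1' : p k ∈ K N := interior_subset hv1
    have h1 : p n ∈ p '' (p ⁻¹' K N) := ⟨n, hu1', rfl⟩
    have h2 : p k ∈ p '' (p ⁻¹' K N) := ⟨k, hv1', rfl⟩
    have e1 : p n = x := by by_contra h; exact hu2 ⟨h1, h⟩
    have e2 : p k = x := by by_contra h; exact hv2 ⟨h2, h⟩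
    rw [e1, e2]

lemma oneEnded_image {Y : Type*} [TopologicalSpace Y] (h : X ≃ₜ Y) {S : Set X}
    (hS : OneEnded S) : OneEnded (h '' S) := by
  intro C hC
  obtain ⟨T, hT1, hT2, hT3⟩ := hS (h.symm '' C) (hC.image h.symm.continuous)
  refine ⟨h '' T, hT1.image h h.continuous.continuousOn, ?_, ?_⟩
  · rintro y ⟨t, ht, rfl⟩ hy
    exact hT2 ht ⟨h t, hy, h.symm_apply_apply t⟩
  · rw [← Set.image_diff h.injective]
    exact hT3.image h

end Aux

theorem more_than_one_end_not_discreteHomogeneous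
    (X : Type*) [TopologicalSpace X] [T2Space X] [LocallyCompactSpace X]
    [SigmaCompactSpace X] [ConnectedSpace X] [LocallyConnectedSpace X]
    (hnc : ¬ CompactSpace X)
    (K : ℕ → Set X) (hKc : ∀ n, IsCompact (K n))
    (hKi : ∀ n, K n ⊆ interior (K (n + 1))) (hKu : (⋃ n, K n) = Set.univ)
    (hends : ∃ Y Z : ℕ → Set X, IsEnd K Y ∧ IsEnd K Z ∧ Y ≠ Z) :
    ¬ DiscreteHomogeneous X := by
  intro hDH
  obtain ⟨Y, Z, hY, hZ, hYZ⟩ := hends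
  have hKm := K_mono K hKi
  -- basic facts about the ends
  have hYsub : ∀ n, Y n ⊆ (K n)ᶜ := by
    intro n
    obtain ⟨x, _, hx⟩ := (hY n).2.1
    exact hx ▸ connectedComponentIn_subset _ _
  have hZsub : ∀ n, Z n ⊆ (K n)ᶜ := by
    intro n
    obtain ⟨x, _, hx⟩ := (hZ n).2.1
    exact hx ▸ connectedComponentIn_subset _ _
  have hYnest : ∀ {m n}, m ≤ n → Y n ⊆ Y m := by
    intro m n h
    induction h with
    | refl => exact subset_rfl
    | step h ih => exact (hY _).2.2.trans ih
  have hZnest : ∀ {m n}, m ≤ n → Z n ⊆ Z m := by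
    intro m n h
    induction h with
    | refl => exact subset_rfl
    | step h ih => exact (hZ _).2.2.trans ih
  -- choose a level where the two ends separate
  obtain ⟨m₀, hm₀⟩ : ∃ m, Y m ≠ Z m := by
    by_contra h
    push_neg at h
    exact hYZ (funext h)
  -- Y m₀ and Z m₀ are disjoint (distinct connected components)
  have hdisj : Y m₀ ∩ Z m₀ = ∅ := by
    by_contra h
    obtain ⟨p, hpY, hpZ⟩ := Set.nonempty_iff_ne_empty.2 h
    obtain ⟨x, _, hx⟩ := (hY m₀).2.1
    obtain ⟨z, _, hz⟩ := (hZ m₀).2.1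
    apply hm₀
    rw [hx, hz, connectedComponentIn_eq (hx ▸ hpY : p ∈ connectedComponentIn (K m₀)ᶜ x),
      connectedComponentIn_eq (hz ▸ hpZ : p ∈ connectedComponentIn (K m₀)ᶜ z)]
  -- a component containing a point of Y m₀ / Z m₀ is contained in it
  have hcompY : ∀ {T : Set X}, IsPreconnected T → T ⊆ (K m₀)ᶜ → ∀ {p}, p ∈ T → p ∈ Y m₀ →
      T ⊆ Y m₀ := by
    intro T hT hTsub p hpT hpY
    obtain ⟨x, _, hx⟩ := (hY m₀).2.1
    have : connectedComponentIn (K m₀)ᶜ x = connectedComponentIn (K m₀)ᶜ p :=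
      connectedComponentIn_eq (hx ▸ hpY)
    rw [hx, this]
    exact hT.subset_connectedComponentIn hpT hTsub
  have hcompZ : ∀ {T : Set X}, IsPreconnected T → T ⊆ (K m₀)ᶜ → ∀ {p}, p ∈ T → p ∈ Z m₀ →
      T ⊆ Z m₀ := by
    intro T hT hTsub p hpT hpZ
    obtain ⟨z, _, hz⟩ := (hZ m₀).2.1
    have : connectedComponentIn (K m₀)ᶜ z = connectedComponentIn (K m₀)ᶜ p :=
      connectedComponentIn_eq (hz ▸ hpZ)
    rw [hz, this]
    exact hT.subset_connectedComponentIn hpT hTsub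
  -- choose points escaping along each end
  choose a ha using fun n => (hY n).1
  choose c hc using fun n => (hZ n).1
  have haK : ∀ n, a n ∉ K n := fun n => hYsub n (ha n)
  have hcK : ∀ n, c n ∉ K n := fun n => hZsub n (hc n)
  -- the two discrete sets
  set b : ℕ → X := fun n => if n % 2 = 0 then a (n / 2) else c (n / 2) with hb
  set A : Set X := Set.range a with hA
  set B : Set X := Set.range b with hB
  -- escape properties
  have hpa : ∀ N, (a ⁻¹' K N).Finite := by
    intro N
    apply Set.Finite.subset (Set.finite_Iio N)
    intro n hn
    by_contra h
    exact haK n (hKm (not_lt.1 h) hn)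
  have hpc : ∀ N, (c ⁻¹' K N).Finite := by
    intro N
    apply Set.Finite.subset (Set.finite_Iio N)
    intro n hn
    by_contra h
    exact hcK n (hKm (not_lt.1 h) hn)
  have hbK : ∀ n, b n ∉ K (n / 2) := by
    intro n
    simp only [hb]
    split_ifs with h
    · exact haK (n / 2)
    · exact hcK (n / 2)
  have hpb : ∀ N, (b ⁻¹' K N).Finite := by
    intro N
    apply Set.Finite.subset (Set.finite_Iio (2 * N + 2))
    intro n hn
    by_contra h
    simp only [Set.mem_Iio, not_lt] at h
    have : N ≤ n / 2 := by omega
    exact hbK n (hKm this hn)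
  -- discreteness
  have hAd : IsDiscreteSubset A := discrete_of_escape K hKi hKu a hpa
  have hBd : IsDiscreteSubset B := discrete_of_escape K hKi hKu b hpb
  -- infiniteness and equinumerosity
  have hAinf : A.Infinite := infinite_of_escape K hKi hKu a hpa
  have hBinf : B.Infinite := infinite_of_escape K hKi hKu b hpb
  have hequiv : Nonempty (A ≃ B) := by
    have h1 : Countable A := (Set.countable_range a).to_subtype
    have h2 : Countable B := (Set.countable_range b).to_subtype
    have h3 : Infinite A := hAinf.to_subtype
    have h4 : Infinite B := hBinf.to_subtype
    obtain ⟨dA⟩ := nonempty_denumerable_iff.2 ⟨h1, h3⟩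
    obtain ⟨dB⟩ := nonempty_denumerable_iff.2 ⟨h2, h4⟩
    exact ⟨(@Denumerable.eqv _ dA).trans (@Denumerable.eqv _ dB).symm⟩
  -- get the homeomorphism
  obtain ⟨h, hh⟩ := hDH A B hAd hBd hequiv
  -- A is one-ended
  have hAone : OneEnded A := by
    intro C hC
    obtain ⟨m, hm⟩ := absorb K hKi hKu hC
    obtain ⟨x, _, hx⟩ := (hY m).2.1
    refine ⟨Y m, ?_, ?_, ?_⟩
    · rw [hx]; exact isPreconnected_connectedComponentIn
    · exact (hYsub m).trans (Set.compl_subset_compl.2 hm)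
    · apply Set.Finite.subset ((Set.finite_Iio m).image a)
      rintro u ⟨⟨n, rfl⟩, hu⟩
      refine ⟨n, ?_, rfl⟩
      by_contra hn
      exact hu (hYnest (not_lt.1 hn) (ha n))
  -- hence B is one-ended
  have hBone : OneEnded B := hh ▸ oneEnded_image h hAone
  -- but B is not one-ended: contradiction at level m₀
  obtain ⟨T, hT1, hT2, hT3⟩ := hBone (K m₀) (hKc m₀)
  -- points of the form a (n) with n ≥ m₀ inside B
  have haB : ∀ n, a n ∈ B := fun n =>
    ⟨2 * n, by simp [hb, Nat.mul_mod_right, Nat.mul_div_cancel_left n (by norm_num : 0 < 2)]⟩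
  have hcB : ∀ n, c n ∈ B := fun n =>
    ⟨2 * n + 1, by
      have h1 : (2 * n + 1) % 2 = 1 := by omega
      have h2 : (2 * n + 1) / 2 = n := by omega
      simp [hb, h1, h2]⟩
  -- the set of a-points beyond m₀ is infinite
  have hAtail : {x | ∃ n, m₀ ≤ n ∧ a n = x}.Infinite := by
    have : Set.range (fun k => a (k + m₀)) ⊆ {x | ∃ n, m₀ ≤ n ∧ a n = x} := by
      rintro x ⟨k, rfl⟩; exact ⟨k + m₀, Nat.le_add_left _ _, rfl⟩
    refine Set.Infinite.mono this ?_
    apply infinite_of_escape K hKi hKu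
    intro N
    apply Set.Finite.subset (Set.finite_Iio N)
    intro k hk
    by_contra hkn
    simp only [Set.mem_Iio, not_lt] at hkn
    exact haK (k + m₀) (hKm (le_trans hkn (Nat.le_add_right _ _)) hk)
  have hCtail : {x | ∃ n, m₀ ≤ n ∧ c n = x}.Infinite := by
    have : Set.range (fun k => c (k + m₀)) ⊆ {x | ∃ n, m₀ ≤ n ∧ c n = x} := by
      rintro x ⟨k, rfl⟩; exact ⟨k + m₀, Nat.le_add_left _ _, rfl⟩
    refine Set.Infinite.mono this ?_
    apply infinite_of_escape K hKi hKu
    intro N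
    apply Set.Finite.subset (Set.finite_Iio N)
    intro k hk
    by_contra hkn
    simp only [Set.mem_Iio, not_lt] at hkn
    exact hcK (k + m₀) (hKm (le_trans hkn (Nat.le_add_right _ _)) hk)
  -- find a-point and c-point in T
  obtain ⟨p, ⟨n, hn, rfl⟩, hpT⟩ : ({x | ∃ n, m₀ ≤ n ∧ a n = x} \ (B \ T)).Nonempty :=
    (hAtail.diff hT3).nonempty
  obtain ⟨q, ⟨k, hk, rfl⟩, hqT⟩ : ({x | ∃ n, m₀ ≤ n ∧ c n = x} \ (B \ T)).Nonempty :=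
    (hCtail.diff hT3).nonempty
  have hpT' : a n ∈ T := by
    by_contra h; exact hpT ⟨haB n, h⟩
  have hqT' : c k ∈ T := by
    by_contra h; exact hqT ⟨hcB k, h⟩
  -- a n ∈ Y m₀, c k ∈ Z m₀
  have hpY : a n ∈ Y m₀ := hYnest hn (ha n)
  have hqZ : c k ∈ Z m₀ := hZnest hk (hc k)
  -- T is in both components: contradiction with disjointness
  have hTY : T ⊆ Y m₀ := hcompY hT1 hT2 hpT' hpY
  have hTZ : T ⊆ Z m₀ := hcompZ hT1 hT2 hqT' hqZ
  have : a n ∈ Y m₀ ∩ Z m₀ := ⟨hTY hpT', hTZ hpT'⟩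
  rw [hdisj] at this
  exact this
end

section
/- The 2-manifold ℝ × S¹ (the open cylinder) is not discrete homogeneous. -/
instance Circle.instPreconnectedSpace : PreconnectedSpace Circle := by
  constructor
  have h1 : (Set.univ : Set Circle) = Set.range Circle.exp :=
    (Set.range_eq_univ.mpr (fun z : Circle => ⟨Complex.arg (z : ℂ), Circle.exp_arg z⟩)).symm
  rw [h1, ← Set.image_univ]
  exact isPreconnected_univ.image _ (map_continuous Circle.exp).continuousOn

lemma int_eq_of_cast_abs_sub_lt {n m : ℤ} (h : |(n:ℝ) - m| < 1) : n = m := by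
  have h2 : |((n - m : ℤ):ℝ)| < 1 := by push_cast; exact h
  rw [← Int.cast_abs] at h2
  have h3 : |n - m| < 1 := by exact_mod_cast h2
  rw [abs_lt] at h3; omega

/-- The open cylinder `ℝ × S¹` is not discrete homogeneous. -/
theorem cylinder_not_discreteHomogeneous :
    ¬ DiscreteHomogeneous (ℝ × Circle) := by
  intro H
  set p : Circle := 1 with hp
  set fa : ℕ → ℝ × Circle := fun n => ((n:ℝ), p) with hfa_def
  set fb : ℤ → ℝ × Circle := fun m => ((m:ℝ), p) with hfb_def
  have hfb_inj : Function.Injective fb := by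
    intro a b hab
    have h1 : (fb a).1 = (fb b).1 := congrArg Prod.fst hab
    simp only [hfb_def] at h1
    exact_mod_cast h1
  have hfa_inj : Function.Injective fa := by
    intro a b hab
    have h1 : (fa a).1 = (fa b).1 := congrArg Prod.fst hab
    simp only [hfa_def] at h1
    exact_mod_cast h1
  -- discreteness
  have hdisc : ∀ (S : Set (ℝ × Circle)),
      (∀ x ∈ S, ∃ m : ℤ, x = ((m:ℝ), p)) → IsDiscreteSubset S := by
    intro S hS x
    refine ⟨Prod.fst ⁻¹' Metric.ball x.1 (1/2),
      (Metric.isOpen_ball.preimage continuous_fst).mem_nhds (by simp), ?_⟩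
    rintro y ⟨hy1, hy2⟩ z ⟨hz1, hz2⟩
    obtain ⟨n, rfl⟩ := hS y hy2
    obtain ⟨m, rfl⟩ := hS z hz2
    simp only [Set.mem_preimage, Metric.mem_ball, Real.dist_eq] at hy1 hz1
    have hnm : n = m := by
      apply int_eq_of_cast_abs_sub_lt
      calc |(n:ℝ) - m| ≤ |(n:ℝ) - x.1| + |x.1 - m| := abs_sub_le _ _ _
        _ < 1 := by rw [abs_sub_comm x.1 (m:ℝ)]; linarith
    rw [hnm]
  have hdA : IsDiscreteSubset (Set.range fa) := by
    apply hdisc; rintro x ⟨n, rfl⟩; exact ⟨(n:ℤ), by simp [hfa_def]⟩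
  have hdB : IsDiscreteSubset (Set.range fb) := by
    apply hdisc; rintro x ⟨m, rfl⟩; exact ⟨m, rfl⟩
  have heq : Nonempty (Set.range fa ≃ Set.range fb) :=
    ⟨((Equiv.ofInjective fa hfa_inj).symm.trans (Denumerable.eqv ℤ).symm).trans
      (Equiv.ofInjective fb hfb_inj)⟩
  obtain ⟨h, hAB⟩ := H (Set.range fa) (Set.range fb) hdA hdB heq
  -- the three regions
  set C : Set (ℝ × Circle) := {x | 1 ≤ x.1} with hCdef
  set D : Set (ℝ × Circle) := {x | x.1 ≤ -1} with hDdef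
  set M : Set (ℝ × Circle) := Set.Icc (-1:ℝ) 1 ×ˢ (Set.univ : Set Circle) with hMdef
  have hC_closed : IsClosed C := isClosed_le continuous_const continuous_fst
  have hD_closed : IsClosed D := isClosed_le continuous_fst continuous_const
  have hhC_closed : IsClosed (h '' C) := h.isClosedMap C hC_closed
  have hhD_closed : IsClosed (h '' D) := h.isClosedMap D hD_closed
  have hdisj : ∀ x, x ∈ h '' C → x ∈ h '' D → False := by
    rintro x ⟨y, hy, rfl⟩ ⟨z, hz, hzx⟩
    have : z = y := h.injective hzx
    rw [this] at hz
    simp only [hCdef, hDdef, Set.mem_setOf_eq] at hy hz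
    linarith
  -- bound for the image of the compact middle strip
  have hMcomp : IsCompact (h '' M) :=
    ((isCompact_Icc.prod isCompact_univ).image h.continuous)
  obtain ⟨R, hR⟩ : ∃ R : ℝ, ∀ x ∈ h '' M, -R ≤ x.1 ∧ x.1 ≤ R := by
    obtain ⟨R, hR⟩ := (hMcomp.image continuous_fst).isBounded.subset_closedBall 0
    refine ⟨R, fun x hx => ?_⟩
    have := hR ⟨x, hx, rfl⟩
    simp only [Real.closedBall_eq_Icc, zero_sub, zero_add, Set.mem_Icc] at this
    exact this
  -- covering
  have hcover : ∀ x : ℝ × Circle, x ∈ h '' C ∪ h '' D ∪ h '' M := by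
    intro x
    have hx : x = h (h.symm x) := (h.apply_symm_apply x).symm
    rcases le_or_gt 1 (h.symm x).1 with h1 | h1
    · exact Or.inl (Or.inl ⟨_, h1, hx.symm⟩)
    rcases le_or_gt (h.symm x).1 (-1) with h2 | h2
    · exact Or.inl (Or.inr ⟨_, h2, hx.symm⟩)
    · exact Or.inr ⟨_, ⟨⟨le_of_lt h2, le_of_lt h1⟩, trivial⟩, hx.symm⟩
  -- key: for distinct integers, at least one lands in h '' C
  have hkey : ∀ m₁ m₂ : ℤ, m₁ ≠ m₂ → fb m₁ ∈ h '' C ∨ fb m₂ ∈ h '' C := by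
    intro m₁ m₂ hne
    have hmem : ∀ m : ℤ, ∃ n : ℕ, h (fa n) = fb m := by
      intro m
      have : fb m ∈ h '' Set.range fa := hAB ▸ Set.mem_range_self m
      obtain ⟨y, ⟨n, rfl⟩, hy⟩ := this
      exact ⟨n, hy⟩
    obtain ⟨n₁, hn₁⟩ := hmem m₁
    obtain ⟨n₂, hn₂⟩ := hmem m₂
    rcases Nat.eq_zero_or_pos n₁ with h0 | hpos
    · rcases Nat.eq_zero_or_pos n₂ with h0' | hpos'
      · exfalso
        apply hne
        apply hfb_inj
        rw [← hn₁, ← hn₂, h0, h0']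
      · right
        refine ⟨fa n₂, ?_, hn₂⟩
        simp only [hCdef, Set.mem_setOf_eq, hfa_def]
        exact_mod_cast hpos'
    · left
      refine ⟨fa n₁, ?_, hn₁⟩
      simp only [hCdef, Set.mem_setOf_eq, hfa_def]
      exact_mod_cast hpos
  -- points of B far out in both directions lying in h '' C
  have hpos_pt : ∃ m : ℤ, R < (m:ℝ) ∧ fb m ∈ h '' C := by
    rcases hkey (⌈R⌉ + 1) (⌈R⌉ + 2) (by omega) with hc | hc
    · exact ⟨⌈R⌉ + 1, by push_cast; linarith [Int.le_ceil R], hc⟩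
    · exact ⟨⌈R⌉ + 2, by push_cast; linarith [Int.le_ceil R], hc⟩
  have hneg_pt : ∃ m : ℤ, (m:ℝ) < -R ∧ fb m ∈ h '' C := by
    rcases hkey (-(⌈R⌉ + 1)) (-(⌈R⌉ + 2)) (by omega) with hc | hc
    · exact ⟨-(⌈R⌉ + 1), by push_cast; linarith [Int.le_ceil R], hc⟩
    · exact ⟨-(⌈R⌉ + 2), by push_cast; linarith [Int.le_ceil R], hc⟩
  -- connectedness argument: a preconnected set avoiding h '' M and meeting h '' C sits in h '' C
  have hVC : ∀ V : Set (ℝ × Circle), IsPreconnected V →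
      (∀ x ∈ V, x ∉ h '' M) → (V ∩ h '' C).Nonempty → V ⊆ h '' C := by
    intro V hVpre hVM ⟨x₁, hx₁V, hx₁C⟩
    have hVsub : V ⊆ h '' C ∪ h '' D := by
      intro x hx
      rcases hcover x with (hc | hc) | hc
      · exact Or.inl hc
      · exact Or.inr hc
      · exact absurd hc (hVM x hx)
    intro x hx
    by_contra hxC
    have hxD : x ∈ h '' D := (hVsub hx).resolve_left hxC
    obtain ⟨y, hyV, hy1, hy2⟩ := hVpre (h '' D)ᶜ (h '' C)ᶜ
      hhD_closed.isOpen_compl hhC_closed.isOpen_compl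
      (fun z hz => by
        by_cases hzD : z ∈ h '' D
        · exact Or.inr (fun hzC => hdisj z hzC hzD)
        · exact Or.inl hzD)
      ⟨x₁, hx₁V, fun hc => hdisj x₁ hx₁C hc⟩
      ⟨x, hx, hxC⟩
    rcases hVsub hyV with hc | hc
    · exact hy2 hc
    · exact hy1 hc
  -- the two outer annuli are inside h '' C
  have houter : ∀ x : ℝ × Circle, R < x.1 ∨ x.1 < -R → x ∈ h '' C := by
    have hprecIoi : IsPreconnected {x : ℝ × Circle | R < x.1} := by
      have : {x : ℝ × Circle | R < x.1} = Set.Ioi R ×ˢ (Set.univ : Set Circle) := by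
        ext x; simp [Set.mem_prod]
      rw [this]
      exact isPreconnected_Ioi.prod isPreconnected_univ
    have hprecIio : IsPreconnected {x : ℝ × Circle | x.1 < -R} := by
      have : {x : ℝ × Circle | x.1 < -R} = Set.Iio (-R) ×ˢ (Set.univ : Set Circle) := by
        ext x; simp [Set.mem_prod]
      rw [this]
      exact isPreconnected_Iio.prod isPreconnected_univ
    intro x hx
    rcases hx with hx | hx
    · obtain ⟨m, hm1, hm2⟩ := hpos_pt
      exact hVC _ hprecIoi
        (fun z hz hzM => absurd (hR z hzM).2 (not_le.mpr hz))
        ⟨fb m, by simpa [hfb_def] using hm1, hm2⟩ hx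
    · obtain ⟨m, hm1, hm2⟩ := hneg_pt
      exact hVC _ hprecIio
        (fun z hz hzM => absurd (hR z hzM).1 (not_le.mpr hz))
        ⟨fb m, by simpa [hfb_def] using hm1, hm2⟩ hx
  -- hence h '' D is trapped in the compact middle band
  have hDband : h '' D ⊆ Set.Icc (-R) R ×ˢ (Set.univ : Set Circle) := by
    intro x hx
    refine ⟨⟨?_, ?_⟩, trivial⟩
    · by_contra hc
      exact hdisj x (houter x (Or.inr (not_le.mp hc))) hx
    · by_contra hc
      exact hdisj x (houter x (Or.inl (not_le.mp hc))) hx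
  have hhDcomp : IsCompact (h '' D) :=
    (isCompact_Icc.prod isCompact_univ).of_isClosed_subset hhD_closed hDband
  have hDcomp : IsCompact D := by
    have : D = h.symm '' (h '' D) := by
      rw [Set.image_image]; simp
    rw [this]
    exact hhDcomp.image h.symm.continuous
  -- but D is not compact
  have hKcomp : IsCompact (Prod.fst '' D) := hDcomp.image continuous_fst
  obtain ⟨c, hc⟩ := hKcomp.bddBelow
  have hmem : min c (-1) - 1 ∈ Prod.fst '' D := by
    refine ⟨(min c (-1) - 1, p), ?_, rfl⟩
    simp only [hDdef, Set.mem_setOf_eq]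
    have := min_le_right c (-1)
    linarith
  have := hc hmem
  have := min_le_left c (-1)
  linarith
end
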